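/- In the abstract multispace BDDC setting, the smallest eigenvalue of the preconditioned operator BA satisfies λ_min(BA) ≥ 1; equivalently, a(BAu, u) ≥ a(u, u) for all u ∈ U. -/

import Mathlib

lemma sum_submodule_eq_iSup {R M ι : Type*} [CommRing R] [AddCommGroup M] [Module R M]
    (s : Finset ι) (p : ι → Submodule R M) : (∑ i ∈ s, p i) = ⨆ i ∈ s, p i := by
  classical
  induction s using Finset.induction_on with
  | empty => simp
  | insert _ _ h ih =>
    rw [Finset.sum_insert h, ih, Submodule.add_eq_sup, Finset.iSup_insert]

/-- In the abstract multispace BDDC setting, the smallest eigenvalue of `BA`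
is at least `1`; equivalently `a(BAu, u) ≥ a(u,u)` for all `u ∈ U`. -/
theorem stmt5 {W : Type*} [AddCommGroup W] [Module ℝ W] [FiniteDimensional ℝ W]
    (a : W →ₗ[ℝ] W →ₗ[ℝ] ℝ) (hsymm : ∀ x y, a x y = a y x)
    {N : ℕ} (V : Fin N → Submodule ℝ W)
    (horth : ∀ k l, k ≠ l → ∀ v ∈ V k, ∀ w ∈ V l, a v w = 0)
    (hpos : ∀ k, ∀ v ∈ V k, v ≠ 0 → 0 < a v v)
    (U : Submodule ℝ W) (hU : U ≤ ∑ k, V k)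
    (hposU : ∀ u ∈ U, u ≠ 0 → 0 < a u u)
    (Q : Fin N → W →ₗ[ℝ] W)
    (hQU : ∀ k, ∀ v ∈ V k, Q k v ∈ U)
    (hQdec : ∀ u ∈ U, ∀ v : Fin N → W, (∀ k, v k ∈ V k) → u = ∑ k, v k →
      u = ∑ k, Q k (v k))
    (BA : W →ₗ[ℝ] W)
    (hBA : ∀ u ∈ U, ∃ v : Fin N → W, (∀ k, v k ∈ V k) ∧
      (∀ k, ∀ z ∈ V k, a (v k) z = a u (Q k z)) ∧ BA u = ∑ k, Q k (v k)) :
    ∀ u ∈ U, a u u ≤ a (BA u) u := by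
  intro u hu
  -- decompose u into the V k
  have humem : u ∈ ⨆ k ∈ Finset.univ, V k := by
    rw [← sum_submodule_eq_iSup]; exact hU hu
  obtain ⟨μ, hμ⟩ := (Submodule.mem_iSup_finset_iff_exists_sum V u).mp humem
  set w : Fin N → W := fun k => (μ k : W) with hw
  have hwV : ∀ k, w k ∈ V k := fun k => (μ k).2
  have hsum : u = ∑ k, w k := hμ.symm
  obtain ⟨v, hvV, hvQ, hBAu⟩ := hBA u hu
  -- u = ∑ Q k (w k)
  have hQw : u = ∑ k, Q k (w k) := hQdec u hu w hwV hsum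
  -- key sums
  have haw : a u u = ∑ k, a (v k) (w k) := by
    calc a u u = a u (∑ k, Q k (w k)) := by rw [← hQw]
    _ = ∑ k, a u (Q k (w k)) := by rw [map_sum]
    _ = ∑ k, a (v k) (w k) := by
        exact Finset.sum_congr rfl fun k _ => (hvQ k (w k) (hwV k)).symm
  have hav : a (BA u) u = ∑ k, a (v k) (v k) := by
    calc a (BA u) u = a u (BA u) := hsymm _ _
    _ = a u (∑ k, Q k (v k)) := by rw [hBAu]
    _ = ∑ k, a u (Q k (v k)) := by rw [map_sum]
    _ = ∑ k, a (v k) (v k) := Finset.sum_congr rfl fun k _ => (hvQ k (v k) (hvV k)).symm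
  have haww : a u u = ∑ k, a (w k) (w k) := by
    calc a u u = a (∑ k, w k) (∑ l, w l) := by rw [← hsum]
    _ = ∑ k, ∑ l, a (w k) (w l) := by simp only [map_sum, LinearMap.sum_apply]; exact Finset.sum_comm
    _ = ∑ k, a (w k) (w k) := by
        refine Finset.sum_congr rfl fun k _ => ?_
        rw [Finset.sum_eq_single k]
        · intro l _ hlk; exact horth k l (Ne.symm hlk) _ (hwV k) _ (hwV l)
        · intro h; exact absurd (Finset.mem_univ k) h
  -- nonnegativity of a on each V k
  have hnn : ∀ k, 0 ≤ a (v k - w k) (v k - w k) := by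
    intro k
    rcases eq_or_ne (v k - w k) 0 with h | h
    · simp [h]
    · exact le_of_lt (hpos k _ (Submodule.sub_mem _ (hvV k) (hwV k)) h)
  have hexp : ∀ k, a (v k - w k) (v k - w k)
      = a (v k) (v k) - 2 * a (v k) (w k) + a (w k) (w k) := by
    intro k
    have h1 : a (w k) (v k) = a (v k) (w k) := hsymm _ _
    simp [map_sub, LinearMap.sub_apply, h1]
    ring
  have hsumnn : 0 ≤ ∑ k, a (v k - w k) (v k - w k) :=
    Finset.sum_nonneg fun k _ => hnn k
  have : (0:ℝ) ≤ a (BA u) u - 2 * a u u + a u u := by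
    calc (0:ℝ) ≤ ∑ k, a (v k - w k) (v k - w k) := hsumnn
    _ = ∑ k, (a (v k) (v k) - 2 * a (v k) (w k) + a (w k) (w k)) :=
        Finset.sum_congr rfl fun k _ => hexp k
    _ = (∑ k, a (v k) (v k)) - 2 * (∑ k, a (v k) (w k)) + ∑ k, a (w k) (w k) := by
        rw [Finset.sum_add_distrib, Finset.sum_sub_distrib, Finset.mul_sum]
    _ = a (BA u) u - 2 * a u u + a u u := by rw [← hav, ← haw, ← haww]
  linarith
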